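/- arXiv:2003.00511 — 3 statements merged into one kernel-verified Lean document; each statement's English description precedes it below -/
import Mathlib

section
/- Let $\phi$ be a negation-free formula (built with $\to$ only) with no repeated variables, and let $p$ be a variable occurring in $\phi$ with $\phi \neq p$. Then there exists an assignment making $\phi$ true with $p$ true, and there exists an assignment making $\phi$ true with $p$ false. -/
/-- Well-formed formulae built from variables with negation and implication. -/
inductive Fml (V : Type) : Type
  | var : V → Fml V
  | neg : Fml V → Fml V
  | imp : Fml V → Fml V → Fml V

namespace Fml
variable {V : Type}

/-- Boolean evaluation under an assignment `v : V → Bool`. -/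
def eval (v : V → Bool) : Fml V → Bool
  | var p => v p
  | neg φ => !(eval v φ)
  | imp φ ψ => !(eval v φ) || eval v ψ

/-- The list of variable occurrences (leaves, left to right). -/
def varList : Fml V → List V
  | var p => [p]
  | neg φ => varList φ
  | imp φ ψ => varList φ ++ varList ψ

/-- A formula is negation-free if it contains no `¬`. -/
def NegFree : Fml V → Prop
  | var _ => True
  | neg _ => False
  | imp φ ψ => NegFree φ ∧ NegFree ψ

/-- The rightmost variable (rightmost leaf). -/
def rightmost : Fml V → V
  | var p => p
  | neg φ => rightmost φ
  | imp _ ψ => rightmost ψ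

/-- Whether a formula contains at least one `¬`. -/
def HasNeg : Fml V → Prop
  | var _ => False
  | neg _ => True
  | imp φ ψ => HasNeg φ ∨ HasNeg ψ

/-- Length of a formula. -/
def len : Fml V → ℕ
  | var _ => 1
  | neg φ => len φ + 1
  | imp φ ψ => len φ + len ψ + 1

/-- Number of occurrences of `¬`. -/
def negCount : Fml V → ℕ
  | var _ => 0
  | neg φ => negCount φ + 1
  | imp φ ψ => negCount φ + negCount ψ

end Fml

namespace FmlAux
open Fml

lemma eval_congr {V : Type} (φ : Fml V) (v w : V → Bool)
    (h : ∀ x ∈ varList φ, v x = w x) : eval v φ = eval w φ := by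
  induction φ with
  | var q => exact h q (by simp [varList])
  | neg α ih => simp [eval, ih (fun x hx => h x (by simpa [varList] using hx))]
  | imp α β ih1 ih2 =>
    simp only [eval]
    rw [ih1 (fun x hx => h x (by simp [varList, hx])),
        ih2 (fun x hx => h x (by simp [varList, hx]))]

lemma eval_allTrue {V : Type} (φ : Fml V) (hnf : NegFree φ) (v : V → Bool)
    (h : ∀ x ∈ varList φ, v x = true) : eval v φ = true := by
  induction φ with
  | var q => exact h q (by simp [varList])
  | neg α ih => exact absurd hnf id
  | imp α β ih1 ih2 =>
    simp only [eval, Bool.or_eq_true]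
    exact Or.inr (ih2 hnf.2 (fun x hx => h x (by simp [varList, hx])))

lemma exists_false {V : Type} (φ : Fml V) (hnf : NegFree φ)
    (hnd : (varList φ).Nodup) : ∃ v : V → Bool, eval v φ = false := by
  classical
  induction φ with
  | var q => exact ⟨fun _ => false, rfl⟩
  | neg α ih => exact absurd hnf id
  | imp α β ih1 ih2 =>
    rw [varList, List.nodup_append] at hnd
    obtain ⟨v, hv⟩ := ih2 hnf.2 hnd.2.1
    refine ⟨fun x => if x ∈ varList β then v x else true, ?_⟩
    have hα : eval (fun x => if x ∈ varList β then v x else true) α = true := by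
      apply eval_allTrue α hnf.1
      intro x hx
      have : x ∉ varList β := fun hxb => hnd.2.2 x hx x hxb rfl
      simp [this]
    have hβ : eval (fun x => if x ∈ varList β then v x else true) β = false := by
      rw [eval_congr β _ v (fun x hx => by simp [hx])]; exact hv
    simp only [eval]; rw [hα, hβ]; rfl

lemma mk_true_false {V : Type} (φ : Fml V) (p : V)
    (hnf : NegFree φ) (hnd : (varList φ).Nodup)
    (hp : p ∈ varList φ) (hne : φ ≠ var p) :
    ∃ v : V → Bool, eval v φ = true ∧ v p = false := by
  classical
  induction φ with
  | var q =>
    simp only [varList, List.mem_singleton] at hp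
    exact absurd (by rw [hp]) hne
  | neg α ih => exact absurd hnf id
  | imp α β ih1 ih2 =>
    rw [varList, List.nodup_append] at hnd
    rw [varList, List.mem_append] at hp
    rcases hp with hpα | hpβ
    · -- p on the left: make β all-true, set p false
      refine ⟨fun x => if x = p then false else true, ?_, by simp⟩
      have hβ : eval (fun x => if x = p then false else true) β = true := by
        apply eval_allTrue β hnf.2
        intro x hx
        have : x ≠ p := fun h => hnd.2.2 p hpα x hx h.symm
        simp [this]
      simp only [eval]; rw [hβ]; simp
    · by_cases hβp : β = var p
      · -- β is exactly p : make α false and set p false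
        obtain ⟨v, hv⟩ := exists_false α hnf.1 hnd.1
        have hpnα : p ∉ varList α := fun h => hnd.2.2 p h p hpβ rfl
        refine ⟨fun x => if x ∈ varList α then v x else false, ?_, by simp [hpnα]⟩
        have hα : eval (fun x => if x ∈ varList α then v x else false) α = false := by
          rw [eval_congr α _ v (fun x hx => by simp [hx])]; exact hv
        simp only [eval]; rw [hα]; rfl
      · obtain ⟨v, hv, hvp⟩ := ih2 hnf.2 hnd.2.1 hpβ hβp
        refine ⟨fun x => if x ∈ varList β then v x else true, ?_, by simp [hpβ, hvp]⟩
        have hβ : eval (fun x => if x ∈ varList β then v x else true) β = true := by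
          rw [eval_congr β _ v (fun x hx => by simp [hx])]; exact hv
        simp only [eval]; rw [hβ]; simp

end FmlAux

theorem negFree_noRepeat_true_with_p {V : Type} (φ : Fml V) (p : V)
    (hnf : Fml.NegFree φ) (hnd : (Fml.varList φ).Nodup)
    (hp : p ∈ Fml.varList φ) (hne : φ ≠ Fml.var p) :
    (∃ v : V → Bool, Fml.eval v φ = true ∧ v p = true) ∧
    (∃ v : V → Bool, Fml.eval v φ = true ∧ v p = false) := by
  constructor
  · exact ⟨fun _ => true, FmlAux.eval_allTrue φ hnf _ (fun _ _ => rfl), rfl⟩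
  · exact FmlAux.mk_true_false φ p hnf hnd hp hne
end

section
/- Let $\phi$ be a negation-free formula (built with $\to$ only) with no repeated variables, and let $p$ be a variable of $\phi$ that is not the rightmost variable of $\phi$. Then there exists an assignment making $\phi$ false in which $p$ is assigned true. -/
open Fml in
lemma rightmost_mem (φ : Fml V) : Fml.rightmost φ ∈ Fml.varList φ := by
  induction φ with
  | var p => simp [Fml.rightmost, Fml.varList]
  | neg φ ih => simpa [Fml.rightmost, Fml.varList] using ih
  | imp φ ψ ihφ ihψ => simp [Fml.rightmost, Fml.varList, ihψ]

lemma eval_true_of_all_true {V : Type} (v : V → Bool) (φ : Fml V)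
    (hnf : Fml.NegFree φ) (h : ∀ q ∈ Fml.varList φ, v q = true) :
    Fml.eval v φ = true := by
  induction φ with
  | var p => simpa [Fml.eval, Fml.varList] using h p
  | neg φ ih => exact absurd hnf id
  | imp φ ψ ihφ ihψ =>
    have := ihψ hnf.2 (fun q hq => h q (by simp [Fml.varList, hq]))
    simp [Fml.eval, this]

lemma eval_false_of_rightmost_false {V : Type} (v : V → Bool) (φ : Fml V)
    (hnf : Fml.NegFree φ) (hnd : (Fml.varList φ).Nodup)
    (hr : v (Fml.rightmost φ) = false)
    (h : ∀ q ∈ Fml.varList φ, q ≠ Fml.rightmost φ → v q = true) :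
    Fml.eval v φ = false := by
  induction φ with
  | var p => simpa [Fml.eval, Fml.rightmost] using hr
  | neg φ ih => exact absurd hnf id
  | imp φ ψ ihφ ihψ =>
    simp only [Fml.varList, List.nodup_append] at hnd
    have hrψ : Fml.rightmost ψ ∈ Fml.varList ψ := rightmost_mem ψ
    have h1 : Fml.eval v φ = true := by
      refine eval_true_of_all_true v φ hnf.1 (fun q hq => ?_)
      refine h q (by simp [Fml.varList, hq]) ?_
      intro hcon
      exact hnd.2.2 q hq _ hrψ hcon
    have h2 : Fml.eval v ψ = false := by
      refine ihψ hnf.2 hnd.2.1 hr (fun q hq hne => ?_)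
      exact h q (by simp [Fml.varList, hq]) hne
    simp [Fml.eval, h1, h2]

theorem negFree_noRepeat_false_with_p_true {V : Type} (φ : Fml V) (p : V)
    (hnf : Fml.NegFree φ) (hnd : (Fml.varList φ).Nodup)
    (hp : p ∈ Fml.varList φ) (hne : p ≠ Fml.rightmost φ) :
    ∃ v : V → Bool, Fml.eval v φ = false ∧ v p = true := by
  classical
  refine ⟨fun q => decide (q ≠ Fml.rightmost φ), ?_, by simp [hne]⟩
  refine eval_false_of_rightmost_false _ φ hnf hnd (by simp) (fun q _ hq => by simp [hq])
end

section
/- For any tautology $\phi$ in the logic with $\neg$ and $\to$, we have $|\phi| \leq -\frac{1}{2}$, where $|\phi| = \|\phi\| - \ell(\phi)/2$, $\|\phi\|$ is the number of distinct variables of $\phi$, and $\ell$ is the length. Moreover, equality $|\phi| = -\frac{1}{2}$ holds if and only if $\phi$ contains no $\neg$, exactly one variable of $\phi$ occurs exactly twice, and every other variable occurs exactly once. For any antilogy $\phi$, $|\phi| \leq -1$. -/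
/-- The quantity `|φ| = ‖φ‖ - ℓ(φ)/2`, where `‖φ‖` is the number of distinct
variables of `φ`. -/
def Fml.normVal {V : Type} [DecidableEq V] (φ : Fml V) : ℚ :=
  ((Fml.varList φ).dedup.length : ℚ) - (Fml.len φ : ℚ) / 2

namespace Fml
variable {V : Type}

lemma len_eq (φ : Fml V) : len φ + 1 = 2 * (varList φ).length + negCount φ := by
  induction φ with
  | var p => simp [len, varList, negCount]
  | neg φ ih => simp only [len, varList, negCount] at *; omega
  | imp φ ψ ih1 ih2 =>
      simp only [len, varList, negCount, List.length_append] at *; omega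

lemma varList_ne_nil (φ : Fml V) : varList φ ≠ [] := by
  induction φ with
  | var p => simp [varList]
  | neg φ ih => simpa [varList] using ih
  | imp φ ψ ih1 ih2 => simp [varList, ih1]

lemma eval_congr {v w : V → Bool} (φ : Fml V) (h : ∀ p ∈ varList φ, v p = w p) :
    eval v φ = eval w φ := by
  induction φ with
  | var p => exact h p (by simp [varList])
  | neg φ ih => simp only [eval]; rw [ih h]
  | imp φ ψ ih1 ih2 =>
      simp only [eval]
      rw [ih1 fun p hp => h p (by simp [varList, hp]),
        ih2 fun p hp => h p (by simp [varList, hp])]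

lemma exists_eval [DecidableEq V] (φ : Fml V) (h : (varList φ).Nodup) (b : Bool) :
    ∃ v : V → Bool, eval v φ = b := by
  induction φ generalizing b with
  | var p => exact ⟨fun _ => b, rfl⟩
  | neg φ ih =>
      obtain ⟨v, hv⟩ := ih h (!b)
      exact ⟨v, by simp [eval, hv]⟩
  | imp φ ψ ih1 ih2 =>
      rw [varList, List.nodup_append] at h
      obtain ⟨h1, h2, hd⟩ := h
      cases b with
      | true =>
          obtain ⟨v, hv⟩ := ih2 h2 true
          exact ⟨v, by simp [eval, hv]⟩
      | false =>
          obtain ⟨v1, hv1⟩ := ih1 h1 true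
          obtain ⟨v2, hv2⟩ := ih2 h2 false
          refine ⟨fun p => if p ∈ varList φ then v1 p else v2 p, ?_⟩
          have e1 : eval (fun p => if p ∈ varList φ then v1 p else v2 p) φ = eval v1 φ :=
            eval_congr φ (fun p hp => by simp [hp])
          have e2 : eval (fun p => if p ∈ varList φ then v1 p else v2 p) ψ = eval v2 ψ :=
            eval_congr ψ (fun p hp => by
              have : p ∉ varList φ := fun hh => hd p hh p hp rfl
              simp [this])
          simp [eval, e1, e2, hv1, hv2]

lemma negFree_eval (φ : Fml V) (h : ¬ HasNeg φ) : eval (fun _ => true) φ = true := by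
  induction φ with
  | var p => rfl
  | neg φ ih => exact absurd trivial h
  | imp φ ψ ih1 ih2 =>
      simp only [HasNeg] at h
      push_neg at h
      simp [eval, ih2 h.2]

lemma negCount_eq_zero (φ : Fml V) : negCount φ = 0 ↔ ¬ HasNeg φ := by
  induction φ with
  | var p => simp [negCount, HasNeg]
  | neg φ ih => simp [negCount, HasNeg]
  | imp φ ψ ih1 ih2 =>
      simp only [negCount, HasNeg, Nat.add_eq_zero]
      tauto

lemma dedup_lt (φ : Fml V) [DecidableEq V] (h : ¬ (varList φ).Nodup) :
    (varList φ).dedup.length + 1 ≤ (varList φ).length := by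
  have hle : (varList φ).dedup.length ≤ (varList φ).length :=
    (List.dedup_sublist _).length_le
  rcases lt_or_eq_of_le hle with hlt | heq
  · omega
  · exact absurd (((List.dedup_sublist _).eq_of_length heq) ▸ (varList φ).nodup_dedup) h

/-- Counting: length = dedup.length + 1 iff exactly one element has count 2, rest 1. -/
lemma count_char [DecidableEq V] (l : List V) :
    l.length = l.dedup.length + 1 ↔
      ∃ p ∈ l, l.count p = 2 ∧ ∀ q ∈ l, q ≠ p → l.count q = 1 := by
  have hsum : ∑ a ∈ l.toFinset, l.count a = l.length := l.sum_toFinset_count_eq_length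
  have hcard : l.toFinset.card = l.dedup.length := l.card_toFinset
  have hpos : ∀ a ∈ l.toFinset, 1 ≤ l.count a := fun a ha =>
    List.count_pos_iff.2 (List.mem_toFinset.1 ha)
  constructor
  · intro h
    have hg : ∑ a ∈ l.toFinset, (l.count a - 1) = 1 := by
      have : ∑ a ∈ l.toFinset, ((l.count a - 1) + 1) = ∑ a ∈ l.toFinset, l.count a :=
        Finset.sum_congr rfl fun a ha => by have := hpos a ha; omega
      rw [Finset.sum_add_distrib, Finset.sum_const, smul_eq_mul, mul_one] at this
      omega
    have hne : ∃ p ∈ l.toFinset, l.count p - 1 ≠ 0 := by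
      by_contra hc
      push_neg at hc
      rw [Finset.sum_eq_zero hc] at hg
      omega
    obtain ⟨p, hp, hp1⟩ := hne
    have hsplit := Finset.sum_erase_add l.toFinset (fun a => l.count a - 1) hp
    rw [hg] at hsplit
    have hpc : l.count p - 1 = 1 := by omega
    have hrest : ∑ a ∈ l.toFinset.erase p, (l.count a - 1) = 0 := by omega
    refine ⟨p, List.mem_toFinset.1 hp, by have := hpos p hp; omega, fun q hq hqp => ?_⟩
    have hq' : q ∈ l.toFinset.erase p := Finset.mem_erase.2 ⟨hqp, List.mem_toFinset.2 hq⟩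
    have := Finset.sum_eq_zero_iff.1 hrest q hq'
    have := hpos q (List.mem_toFinset.2 hq)
    omega
  · rintro ⟨p, hp, hp2, hrest⟩
    have hp' : p ∈ l.toFinset := List.mem_toFinset.2 hp
    have hsplit := Finset.sum_erase_add l.toFinset (fun a => l.count a) hp'
    have herest : ∑ a ∈ l.toFinset.erase p, l.count a = l.toFinset.card - 1 := by
      have : ∀ a ∈ l.toFinset.erase p, l.count a = 1 := fun a ha => by
        obtain ⟨hne, ha'⟩ := Finset.mem_erase.1 ha
        exact hrest a (List.mem_toFinset.1 ha') hne
      rw [Finset.sum_congr rfl this, Finset.sum_const, smul_eq_mul, mul_one,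
        Finset.card_erase_of_mem hp']
    have hcpos : 1 ≤ l.toFinset.card := Finset.card_pos.2 ⟨p, hp'⟩
    rw [herest, hp2, hsum] at hsplit
    omega

end Fml

theorem normVal_tautology_antilogy {V : Type} [DecidableEq V] (φ : Fml V) :
    ((∀ v : V → Bool, Fml.eval v φ = true) →
      (Fml.normVal φ ≤ -(1 / 2) ∧
        (Fml.normVal φ = -(1 / 2) ↔
          (¬ Fml.HasNeg φ ∧
            ∃ p ∈ Fml.varList φ, (Fml.varList φ).count p = 2 ∧
              ∀ q ∈ Fml.varList φ, q ≠ p → (Fml.varList φ).count q = 1)))) ∧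
    ((∀ v : V → Bool, Fml.eval v φ = false) → Fml.normVal φ ≤ -1) := by
  have hlen : Fml.len φ + 1 = 2 * (Fml.varList φ).length + Fml.negCount φ := Fml.len_eq φ
  have hlenQ : (Fml.len φ : ℚ) + 1 =
      2 * ((Fml.varList φ).length : ℚ) + (Fml.negCount φ : ℚ) := by exact_mod_cast hlen
  have hkQ : (0 : ℚ) ≤ (Fml.negCount φ : ℚ) := Nat.cast_nonneg _
  constructor
  · intro htaut
    have hnd : ¬ (Fml.varList φ).Nodup := by
      intro h
      obtain ⟨v, hv⟩ := Fml.exists_eval φ h false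
      rw [htaut v] at hv
      exact Bool.true_eq_false.mp hv
    have hdn : (Fml.varList φ).dedup.length + 1 ≤ (Fml.varList φ).length :=
      Fml.dedup_lt φ hnd
    have hdnQ : ((Fml.varList φ).dedup.length : ℚ) + 1 ≤ ((Fml.varList φ).length : ℚ) := by
      exact_mod_cast hdn
    constructor
    · unfold Fml.normVal
      linarith
    · constructor
      · intro hEq
        unfold Fml.normVal at hEq
        have h2 : 2 * (Fml.varList φ).dedup.length + 1 = Fml.len φ := by
          have : (2 * (Fml.varList φ).dedup.length + 1 : ℚ) = (Fml.len φ : ℚ) := by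
            linarith
          exact_mod_cast this
        have hk0 : Fml.negCount φ = 0 ∧
            (Fml.varList φ).length = (Fml.varList φ).dedup.length + 1 := by omega
        exact ⟨(Fml.negCount_eq_zero φ).1 hk0.1, (Fml.count_char _).1 hk0.2⟩
      · rintro ⟨hnf, hcnt⟩
        have hk0 : Fml.negCount φ = 0 := (Fml.negCount_eq_zero φ).2 hnf
        have hnd1 : (Fml.varList φ).length = (Fml.varList φ).dedup.length + 1 :=
          (Fml.count_char _).2 hcnt
        unfold Fml.normVal
        have : (((Fml.varList φ).length : ℚ)) = ((Fml.varList φ).dedup.length : ℚ) + 1 := by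
          exact_mod_cast hnd1
        have hk0Q : (Fml.negCount φ : ℚ) = 0 := by exact_mod_cast hk0
        linarith
  · intro hanti
    have hnd : ¬ (Fml.varList φ).Nodup := by
      intro h
      obtain ⟨v, hv⟩ := Fml.exists_eval φ h true
      rw [hanti v] at hv
      exact Bool.false_eq_true.mp hv
    have hdn : (Fml.varList φ).dedup.length + 1 ≤ (Fml.varList φ).length :=
      Fml.dedup_lt φ hnd
    have hdnQ : ((Fml.varList φ).dedup.length : ℚ) + 1 ≤ ((Fml.varList φ).length : ℚ) := by
      exact_mod_cast hdn
    have hk1 : 1 ≤ Fml.negCount φ := by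
      by_contra hc
      have hk0 : Fml.negCount φ = 0 := by omega
      have := Fml.negFree_eval φ ((Fml.negCount_eq_zero φ).1 hk0)
      rw [hanti] at this
      exact Bool.false_eq_true.mp this
    have hk1Q : (1 : ℚ) ≤ (Fml.negCount φ : ℚ) := by exact_mod_cast hk1
    unfold Fml.normVal
    linarith
end
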